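/- Let u be the convex envelope of f on Ω̄, let x ∈ Ω with u(x) < f(x), and let p be a subgradient of u at x. Then x lies in the convex hull of the set C(f;x,p) = { y ∈ Ω̄ : f(y) = u(x) + p·(y−x) }. -/

import Mathlib

open scoped RealInnerProductSpace

theorem isCompact_convexHull_aux {E : Type} [NormedAddCommGroup E] [NormedSpace ℝ E]
    [FiniteDimensional ℝ E] {s : Set E} (hs : IsCompact s) : IsCompact (convexHull ℝ s) := by
  classical
  rcases s.eq_empty_or_nonempty with rfl | ⟨z₀, hz₀⟩
  · simp
  set n := Module.finrank ℝ E + 1 with hn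
  set g : (Fin n → ℝ) × (Fin n → E) → E := fun wz => ∑ i, wz.1 i • wz.2 i with hg
  have hgc : Continuous g := by
    apply continuous_finset_sum
    intro i _
    exact ((continuous_apply i).comp continuous_fst).smul
      ((continuous_apply i).comp continuous_snd)
  set D : Set ((Fin n → ℝ) × (Fin n → E)) := (stdSimplex ℝ (Fin n)) ×ˢ (Set.univ.pi fun _ => s)
    with hD
  have hDc : IsCompact D := (isCompact_stdSimplex (𝕜 := ℝ) (ι := Fin n)).prod (isCompact_univ_pi fun _ => hs)
  have key : convexHull ℝ s = g '' D := by
    apply Set.Subset.antisymm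
    · intro x hx
      obtain ⟨ι, hι, z, w, hzs, hai, hw0, hw1, hwz⟩ := eq_pos_convex_span_of_mem_convexHull hx
      have hcard : Fintype.card ι ≤ n := by
        calc Fintype.card ι ≤ Module.finrank ℝ (vectorSpan ℝ (Set.range z)) + 1 :=
              hai.card_le_finrank_succ
          _ ≤ n := by exact Nat.add_le_add_right (Submodule.finrank_le _) 1
      obtain ⟨e⟩ : Nonempty (ι ↪ Fin n) :=
        Function.Embedding.nonempty_of_card_le (by simpa using hcard)
      set w' : Fin n → ℝ := fun j => if h : ∃ i, e i = j then w h.choose else 0 with hw'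
      set z' : Fin n → E := fun j => if h : ∃ i, e i = j then z h.choose else z₀ with hz'
      have hterm1 : ∀ i : ι, w' (e i) = w i := by
        intro i
        have h : ∃ i', e i' = e i := ⟨i, rfl⟩
        have h2 : h.choose = i := e.injective h.choose_spec
        simp only [hw']; rw [dif_pos h, h2]
      have hterm2 : ∀ i : ι, z' (e i) = z i := by
        intro i
        have h : ∃ i', e i' = e i := ⟨i, rfl⟩
        have h2 : h.choose = i := e.injective h.choose_spec
        simp only [hz']; rw [dif_pos h, h2]
      have hnotin : ∀ j : Fin n, j ∈ Finset.univ → j ∉ Finset.univ.map e → w' j = 0 := by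
        intro j _ hj
        have h : ¬∃ i, e i = j := by
          intro ⟨i, hi⟩; exact hj (Finset.mem_map.2 ⟨i, Finset.mem_univ _, hi⟩)
        simp [hw', dif_neg h]
      refine ⟨(w', z'), ⟨?_, ?_⟩, ?_⟩
      · constructor
        · intro j
          by_cases h : ∃ i, e i = j
          · simp only [hw', dif_pos h]; exact (hw0 _).le
          · simp [hw', dif_neg h]
        · show ∑ j, w' j = 1
          calc ∑ j, w' j = ∑ j ∈ Finset.univ.map e, w' j :=
                (Finset.sum_subset (Finset.subset_univ _) hnotin).symm
            _ = ∑ i, w' (e i) := Finset.sum_map _ e w'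
            _ = ∑ i, w i := Finset.sum_congr rfl fun i _ => hterm1 i
            _ = 1 := hw1
      · intro j _
        by_cases h : ∃ i, e i = j
        · simp only [hz', dif_pos h]; exact hzs ⟨_, rfl⟩
        · simp only [hz', dif_neg h]; exact hz₀
      · show ∑ j, w' j • z' j = x
        calc ∑ j, w' j • z' j = ∑ j ∈ Finset.univ.map e, w' j • z' j := by
              refine (Finset.sum_subset (Finset.subset_univ _) ?_).symm
              intro j hj1 hj2; rw [hnotin j hj1 hj2, zero_smul]
          _ = ∑ i, w' (e i) • z' (e i) := Finset.sum_map _ e _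
          _ = ∑ i, w i • z i := Finset.sum_congr rfl fun i _ => by rw [hterm1, hterm2]
          _ = x := hwz
    · rintro _ ⟨⟨w, z⟩, ⟨⟨hw0, hw1⟩, hz⟩, rfl⟩
      exact (convex_convexHull ℝ s).sum_mem (fun i _ => hw0 i) hw1
        (fun i _ => subset_convexHull ℝ s (hz i (Set.mem_univ i)))
  rw [key]
  exact hDc.image hgc

/-- If `u` is the convex envelope of `f`, `x ∈ Ω` with `u x < f x`, and `p` is a
subgradient of `u` at `x`, then `x` lies in the convex hull of
`C(f;x,p) = { y ∈ closure Ω : f y = u x + ⟪p, y - x⟫ }`. -/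
theorem mem_convexHull_contact_set
    (d : ℕ) (Ω : Set (EuclideanSpace ℝ (Fin d)))
    (hΩo : IsOpen Ω) (hΩc : Convex ℝ Ω) (hΩb : Bornology.IsBounded Ω)
    (f u : EuclideanSpace ℝ (Fin d) → ℝ)
    (hf : ContinuousOn f (closure Ω))
    (hu_cvx : ConvexOn ℝ (closure Ω) u)
    (hu_le : ∀ x ∈ closure Ω, u x ≤ f x)
    (hu_max : ∀ v : EuclideanSpace ℝ (Fin d) → ℝ, ConvexOn ℝ (closure Ω) v →
        (∀ x ∈ closure Ω, v x ≤ f x) → ∀ x ∈ closure Ω, v x ≤ u x)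
    (x : EuclideanSpace ℝ (Fin d)) (hx : x ∈ Ω) (hlt : u x < f x)
    (p : EuclideanSpace ℝ (Fin d))
    (hp : ∀ y ∈ closure Ω, u x + ⟪p, y - x⟫ ≤ u y) :
    x ∈ convexHull ℝ {y ∈ closure Ω | f y = u x + ⟪p, y - x⟫} := by
  classical
  by_contra hcon
  set S := closure Ω with hS
  have hxS : x ∈ S := subset_closure hx
  have hSc : IsCompact S := hΩb.isCompact_closure
  set a : EuclideanSpace ℝ (Fin d) → ℝ := fun y => u x + ⟪p, y - x⟫ with ha
  have hac : Continuous a :=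
    continuous_const.add (continuous_const.inner (continuous_id.sub continuous_const))
  have haf : ∀ y ∈ S, a y ≤ f y := fun y hy => (hp y hy).trans (hu_le y hy)
  set K : Set (EuclideanSpace ℝ (Fin d)) := {y ∈ S | f y = a y} with hK
  have hKeq : K = S ∩ (fun y => f y - a y) ⁻¹' {0} := by
    ext y
    simp only [hK, Set.mem_setOf_eq, Set.mem_inter_iff, Set.mem_preimage,
      Set.mem_singleton_iff, sub_eq_zero]
  have hKcl : IsClosed K := by
    rw [hKeq]
    exact (hf.sub hac.continuousOn).preimage_isClosed_of_isClosed
      isClosed_closure isClosed_singleton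
  have hKcpt : IsCompact (convexHull ℝ K) :=
    isCompact_convexHull_aux (hSc.of_isClosed_subset hKcl fun y hy => hy.1)
  obtain ⟨φ, c, hφK, hφx⟩ := geometric_hahn_banach_closed_point
    (convex_convexHull ℝ K) hKcpt.isClosed hcon
  set T : Set (EuclideanSpace ℝ (Fin d)) := {y ∈ S | c ≤ φ y} with hT
  have hTeq : T = S ∩ φ ⁻¹' Set.Ici c := rfl
  have hTcpt : IsCompact T := hSc.of_isClosed_subset
    (hTeq ▸ isClosed_closure.inter (isClosed_Ici.preimage φ.continuous)) (fun y hy => hy.1)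
  have hxT : x ∈ T := ⟨hxS, hφx.le⟩
  set g : EuclideanSpace ℝ (Fin d) → ℝ := fun y => f y - a y with hg
  have hgT : ContinuousOn g T := (hf.sub hac.continuousOn).mono (fun y hy => hy.1)
  obtain ⟨y₀, hy₀T, hmin⟩ := hTcpt.exists_isMinOn ⟨x, hxT⟩ hgT
  set m : ℝ := g y₀ with hm
  have hm0 : 0 < m := by
    have hge : (0:ℝ) ≤ m := sub_nonneg.2 (haf y₀ hy₀T.1)
    rcases hge.lt_or_eq with h | h
    · exact h
    · exfalso
      have hfy : f y₀ = a y₀ := by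
        have h2 := h.symm
        simp only [hm, hg] at h2
        linarith
      exact absurd hy₀T.2 (not_le.2 (hφK y₀ (subset_convexHull ℝ K ⟨hy₀T.1, hfy⟩)))
  obtain ⟨y₁, hy₁S, hmax⟩ := hSc.exists_isMaxOn ⟨x, hxS⟩ φ.continuous.continuousOn
  set B : ℝ := φ y₁ - c with hB
  have hB0 : 0 < B := sub_pos.2 (lt_of_lt_of_le hφx (isMaxOn_iff.mp hmax x hxS))
  set ε : ℝ := m / B with hε
  have hε0 : 0 < ε := div_pos hm0 hB0
  set v : EuclideanSpace ℝ (Fin d) → ℝ := fun y => a y + ε * (φ y - c) with hv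
  have hv_cvx : ConvexOn ℝ S v := by
    refine ⟨hΩc.closure, fun y hy z hz s t hs ht hst => le_of_eq ?_⟩
    have h1 : s • y + t • z - x = s • (y - x) + t • (z - x) := by
      have hx1 : (s + t) • x = x := by rw [hst, one_smul]
      calc s • y + t • z - x = s • y + t • z - (s + t) • x := by rw [hx1]
        _ = s • (y - x) + t • (z - x) := by rw [add_smul, smul_sub, smul_sub]; abel
    simp only [hv, ha, h1, inner_add_right, real_inner_smul_right, map_add, map_smul,
      smul_eq_mul]
    linear_combination (ε * c - u x) * hst
  have hv_le : ∀ y ∈ S, v y ≤ f y := by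
    intro y hy
    by_cases hcy : c ≤ φ y
    · have hyT : y ∈ T := ⟨hy, hcy⟩
      have h2 : ε * (φ y - c) ≤ m := by
        have h3 : φ y - c ≤ B := by
          have := isMaxOn_iff.mp hmax y hy; simp only [hB]; linarith
        calc ε * (φ y - c) ≤ ε * B := by nlinarith
          _ = m := div_mul_cancel₀ m hB0.ne'
      have h4 : m ≤ g y := isMinOn_iff.mp hmin y hyT
      simp only [hv, hg] at *
      linarith
    · have : ε * (φ y - c) ≤ 0 := mul_nonpos_of_nonneg_of_nonpos hε0.le (by linarith [not_le.1 hcy])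
      have := haf y hy
      simp only [hv]; linarith
  have hvu : v x ≤ u x := hu_max v hv_cvx hv_le x hxS
  have hxx : ⟪p, x - x⟫ = (0 : ℝ) := by simp
  have hvx : v x = u x + ε * (φ x - c) := by simp only [hv, ha, hxx]; ring
  rw [hvx] at hvu
  nlinarith [hφx, hε0]
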